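/- For every ℓ ≥ 1, every k ≥ 2, and every real α with 0 < α < ℓ·(k·(k−1)/2) + 1, there exist a number of bidders n, an assignment g : Fin n → Fin ℓ of bidders to expertise groups, and nonnegative valuations v_i that are weakly increasing with respect to the pointwise order on profiles and symmetric within expertise groups, such that for every feasible per-bidder monotone allocation rule x there exists a signal profile s with ∑_i x_i(s)·v_i(s) < (1/α)·max_i v_i(s). (Consequently, no ex-post incentive compatible auction for instances with ℓ expertise types, k signal values, and group-symmetric monotone valuations achieves better than an (ℓ·C(k,2)+1)-approximation to the optimal welfare.) -/

import Mathlib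

open Finset

namespace S9

abbrev Pair (k : ℕ) := {p : Fin k × Fin k // p.2 < p.1}
abbrev Gad (ℓ k : ℕ) := (Fin ℓ × Pair k) ⊕ Unit

instance (ℓ k : ℕ) : Nonempty (Gad ℓ k) := ⟨Sum.inr ()⟩

def pairEquiv (k : ℕ) : Pair k ≃ Σ b : Fin k, Fin (b : ℕ) where
  toFun p := ⟨p.1.1, ⟨(p.1.2 : ℕ), p.2⟩⟩
  invFun q := ⟨(q.1, ⟨(q.2 : ℕ), lt_trans q.2.isLt q.1.isLt⟩), q.2.isLt⟩
  left_inv p := rfl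
  right_inv q := rfl

lemma card_pair (k : ℕ) : Fintype.card (Pair k) = ∑ i ∈ range k, i := by
  rw [Fintype.card_congr (pairEquiv k), Fintype.card_sigma]
  simp only [Fintype.card_fin]
  exact Fin.sum_univ_eq_sum_range (fun i => i) k

lemma card_gad (ℓ k : ℕ) : Fintype.card (Gad ℓ k) = ℓ * (∑ i ∈ range k, i) + 1 := by
  simp [card_pair]


section
variable (ℓ k : ℕ) [NeZero ℓ] [NeZero k]

def grp : Gad ℓ k → Fin ℓ
  | .inl z => z.1
  | .inr _ => 0

def hi : Gad ℓ k → Fin k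
  | .inl z => z.2.1.1
  | .inr _ => 0

def lo : Gad ℓ k → Fin k
  | .inl z => z.2.1.2
  | .inr _ => 0

lemma lo_le_hi (t : Gad ℓ k) : lo ℓ k t ≤ hi ℓ k t := by
  cases t with
  | inl z => exact le_of_lt z.2.2
  | inr u => exact le_refl _

lemma chi_inj (t t' : Gad ℓ k)
    (h : ∀ (δ : Fin ℓ) (c : Fin k),
      ((if grp ℓ k t' = δ ∧ lo ℓ k t' = c then (1:ℤ) else 0)
        - (if grp ℓ k t' = δ ∧ hi ℓ k t' = c then 1 else 0))
      = ((if grp ℓ k t = δ ∧ lo ℓ k t = c then (1:ℤ) else 0)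
        - (if grp ℓ k t = δ ∧ hi ℓ k t = c then 1 else 0))) :
    t' = t := by
  cases t with
  | inr u =>
    cases t' with
    | inr u' => cases u; cases u'; rfl
    | inl z' =>
      exfalso
      obtain ⟨γ', ⟨⟨b', a'⟩, hab'⟩⟩ := z'
      have h1 := h γ' b'
      simp only [grp, lo, hi, sub_self, eq_self_iff_true, true_and, and_true, if_true] at h1
      rw [if_neg (ne_of_lt hab')] at h1
      omega
  | inl z =>
    obtain ⟨γ, ⟨⟨b, a⟩, hab⟩⟩ := z
    cases t' with
    | inr u' =>
      exfalso
      have h1 := h γ b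
      simp only [grp, lo, hi, sub_self, eq_self_iff_true, true_and, and_true, if_true] at h1
      rw [if_neg (ne_of_lt hab)] at h1
      omega
    | inl z' =>
      obtain ⟨γ', ⟨⟨b', a'⟩, hab'⟩⟩ := z'
      have h1 := h γ b
      simp only [grp, lo, hi, eq_self_iff_true, true_and, and_true, if_true] at h1
      rw [if_neg (ne_of_lt hab)] at h1
      have hγb : γ' = γ ∧ b' = b := by
        by_contra hc
        simp only [hc, if_false] at h1
        split_ifs at h1 <;> omega
      obtain ⟨hγ, hb⟩ := hγb
      subst hγ
      subst hb
      have h2 := h γ' a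
      simp only [grp, lo, hi, eq_self_iff_true, true_and, and_true, if_true] at h2
      have hA : (if a' = a then (1:ℤ) else 0) = 1 := by linarith
      have ha : a' = a := by
        by_contra hc
        rw [if_neg hc] at hA
        exact absurd hA (by norm_num)
      subst ha
      rfl


variable (n : ℕ) (e : Gad ℓ k ≃ Fin n)

def gb : Fin n → Fin ℓ := fun i => grp ℓ k (e.symm i)
def Qb : Fin n → Fin k := fun i => hi ℓ k (e.symm i)
def Pb (t : Gad ℓ k) : Fin n → Fin k := Function.update (Qb ℓ k n e) (e t) (lo ℓ k t)
def wb (t : Gad ℓ k) : ℕ := ∑ i, ((Pb ℓ k n e t i : ℕ))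
def Dom (t : Gad ℓ k) (s : Fin n → Fin k) : Prop :=
  ∃ π : Equiv.Perm (Fin n), gb ℓ k n e ∘ π = gb ℓ k n e ∧ ∀ i, Pb ℓ k n e t i ≤ s (π i)

open Classical in
noncomputable def vb (M : ℝ) (i : Fin n) (s : Fin n → Fin k) : ℝ :=
  if Dom ℓ k n e (e.symm i) s then M ^ (wb ℓ k n e (e.symm i)) else 0

lemma gb_e (t : Gad ℓ k) : gb ℓ k n e (e t) = grp ℓ k t := by
  simp [gb]

lemma Qb_e (t : Gad ℓ k) : Qb ℓ k n e (e t) = hi ℓ k t := by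
  simp [Qb]

def Nc (s : Fin n → Fin k) (δ : Fin ℓ) (c : Fin k) : ℤ :=
  ∑ i, if gb ℓ k n e i = δ ∧ s i = c then 1 else 0

lemma Nc_perm (s : Fin n → Fin k) (δ : Fin ℓ) (c : Fin k) (π : Equiv.Perm (Fin n))
    (hπ : gb ℓ k n e ∘ π = gb ℓ k n e) :
    Nc ℓ k n e (fun i => s (π i)) δ c = Nc ℓ k n e s δ c := by
  unfold Nc
  rw [← Equiv.sum_comp π (fun j => if gb ℓ k n e j = δ ∧ s j = c then (1:ℤ) else 0)]
  refine Finset.sum_congr rfl fun i _ => ?_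
  rw [show gb ℓ k n e (π i) = gb ℓ k n e i from congrFun hπ i]

lemma Nc_key (s : Fin n → Fin k) (i0 : Fin n) (c0 : Fin k) (δ : Fin ℓ) (c : Fin k) :
    Nc ℓ k n e (Function.update s i0 c0) δ c - Nc ℓ k n e s δ c =
      (if gb ℓ k n e i0 = δ ∧ c0 = c then 1 else 0)
        - (if gb ℓ k n e i0 = δ ∧ s i0 = c then 1 else 0) := by
  unfold Nc
  rw [← Finset.sum_erase_add univ _ (mem_univ i0),
    ← Finset.sum_erase_add univ (fun i => if gb ℓ k n e i = δ ∧ s i = c then (1:ℤ) else 0)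
      (mem_univ i0)]
  have hcg : ∀ i ∈ univ.erase i0,
      (if gb ℓ k n e i = δ ∧ Function.update s i0 c0 i = c then (1:ℤ) else 0)
        = (if gb ℓ k n e i = δ ∧ s i = c then 1 else 0) := by
    intro i hi
    rw [Function.update_of_ne (Finset.ne_of_mem_erase hi)]
  rw [Finset.sum_congr rfl hcg, Function.update_self]
  ring

lemma Pb_inj (t t' : Gad ℓ k) (π : Equiv.Perm (Fin n))
    (hπ : gb ℓ k n e ∘ π = gb ℓ k n e)
    (h : ∀ j, Pb ℓ k n e t' j = Pb ℓ k n e t (π j)) : t' = t := by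
  apply chi_inj ℓ k t t'
  intro δ c
  have h1 : Nc ℓ k n e (Pb ℓ k n e t') δ c = Nc ℓ k n e (Pb ℓ k n e t) δ c := by
    rw [show Pb ℓ k n e t' = fun j => Pb ℓ k n e t (π j) from funext h]
    exact Nc_perm ℓ k n e _ δ c π hπ
  have e1 := Nc_key ℓ k n e (Qb ℓ k n e) (e t') (lo ℓ k t') δ c
  have e2 := Nc_key ℓ k n e (Qb ℓ k n e) (e t) (lo ℓ k t) δ c
  rw [gb_e, Qb_e] at e1 e2
  rw [show Function.update (Qb ℓ k n e) (e t') (lo ℓ k t') = Pb ℓ k n e t' from rfl] at e1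
  rw [show Function.update (Qb ℓ k n e) (e t) (lo ℓ k t) = Pb ℓ k n e t from rfl] at e2
  rw [← e1, ← e2, h1]


lemma dom_self (t : Gad ℓ k) : Dom ℓ k n e t (Pb ℓ k n e t) :=
  ⟨1, by simp, fun i => by simp⟩

lemma dom_mono {t : Gad ℓ k} {s s' : Fin n → Fin k} (hss : s ≤ s')
    (hd : Dom ℓ k n e t s) : Dom ℓ k n e t s' := by
  obtain ⟨π, hπ, hle⟩ := hd
  exact ⟨π, hπ, fun i => le_trans (hle i) (hss _)⟩

lemma dom_comp (t : Gad ℓ k) (s : Fin n → Fin k) (π : Equiv.Perm (Fin n))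
    (hπ : gb ℓ k n e ∘ π = gb ℓ k n e) :
    Dom ℓ k n e t (s ∘ π) ↔ Dom ℓ k n e t s := by
  have hπ' : gb ℓ k n e ∘ ⇑π⁻¹ = gb ℓ k n e := by
    funext x
    have := congrFun hπ (π⁻¹ x)
    simpa using this.symm
  constructor
  · rintro ⟨σ, hσ, hle⟩
    refine ⟨σ.trans π, ?_, fun i => hle i⟩
    funext i
    have h1 := congrFun hπ (σ i)
    have h2 := congrFun hσ i
    simpa [Equiv.trans_apply] using h1.trans h2
  · rintro ⟨σ, hσ, hle⟩
    refine ⟨σ.trans π⁻¹, ?_, fun i => ?_⟩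
    · funext i
      have h1 := congrFun hπ' (σ i)
      have h2 := congrFun hσ i
      simpa [Equiv.trans_apply] using h1.trans h2
    · have := hle i
      simpa [Equiv.trans_apply] using this

lemma vb_nonneg (M : ℝ) (hM : 0 ≤ M) (i : Fin n) (s : Fin n → Fin k) :
    0 ≤ vb ℓ k n e M i s := by
  unfold vb
  split
  · positivity
  · exact le_refl 0

lemma vb_mono (M : ℝ) (hM : 0 ≤ M) (i : Fin n) : Monotone (vb ℓ k n e M i) := by
  intro s s' hss
  unfold vb
  by_cases hd : Dom ℓ k n e (e.symm i) s
  · rw [if_pos hd, if_pos (dom_mono ℓ k n e hss hd)]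
  · rw [if_neg hd]
    split
    · positivity
    · exact le_refl 0

lemma vb_symm (M : ℝ) (j : Fin n) (s : Fin n → Fin k) (π : Equiv.Perm (Fin n))
    (hπ : gb ℓ k n e ∘ π = gb ℓ k n e) :
    vb ℓ k n e M j (s ∘ π) = vb ℓ k n e M j s := by
  classical
  unfold vb
  rw [if_congr (dom_comp ℓ k n e (e.symm j) s π hπ) rfl rfl]


lemma vb_self (M : ℝ) (t : Gad ℓ k) :
    vb ℓ k n e M (e t) (Pb ℓ k n e t) = M ^ wb ℓ k n e t := by
  classical
  unfold vb
  rw [Equiv.symm_apply_apply, if_pos (dom_self ℓ k n e t)]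

lemma vb_other (M : ℝ) (hM : 1 ≤ M) (t : Gad ℓ k) (i : Fin n) (hne : i ≠ e t) :
    vb ℓ k n e M i (Pb ℓ k n e t) ≤ M ^ wb ℓ k n e t / M := by
  classical
  have hM0 : (0:ℝ) < M := lt_of_lt_of_le one_pos hM
  unfold vb
  by_cases hd : Dom ℓ k n e (e.symm i) (Pb ℓ k n e t)
  · rw [if_pos hd]
    obtain ⟨π, hπ, hle⟩ := hd
    have hle' : ∀ j, ((Pb ℓ k n e (e.symm i) j : ℕ)) ≤ ((Pb ℓ k n e t (π j) : ℕ)) :=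
      fun j => hle j
    have hwle : wb ℓ k n e (e.symm i) ≤ wb ℓ k n e t := by
      unfold wb
      calc ∑ j, ((Pb ℓ k n e (e.symm i) j : ℕ))
          ≤ ∑ j, ((Pb ℓ k n e t (π j) : ℕ)) := Finset.sum_le_sum fun j _ => hle' j
        _ = ∑ j, ((Pb ℓ k n e t j : ℕ)) := Equiv.sum_comp π (fun j => ((Pb ℓ k n e t j : ℕ)))
    have hnet : e.symm i ≠ t := by
      intro hc
      apply hne
      rw [← hc, Equiv.apply_symm_apply]
    have hlt : wb ℓ k n e (e.symm i) < wb ℓ k n e t := by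
      rcases lt_or_eq_of_le hwle with h | h
      · exact h
      · exfalso
        apply hnet
        have hsums : ∑ j, ((Pb ℓ k n e (e.symm i) j : ℕ)) = ∑ j, ((Pb ℓ k n e t (π j) : ℕ)) := by
          rw [Equiv.sum_comp π (fun j => ((Pb ℓ k n e t j : ℕ)))]
          exact h
        have hpt := (Finset.sum_eq_sum_iff_of_le (fun j _ => hle' j)).mp hsums
        exact Pb_inj ℓ k n e t (e.symm i) π hπ
          (fun j => Fin.val_injective (hpt j (mem_univ j)))
    rw [le_div_iff₀ hM0, ← pow_succ]
    exact pow_le_pow_right₀ hM hlt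
  · rw [if_neg hd]
    positivity

end
end S9

/-- For every `ℓ ≥ 1`, `k ≥ 2`, and real `α` with
`0 < α < ℓ·(k(k-1)/2) + 1`, there exist a number of bidders `n`, a group assignment
`g`, and nonnegative valuations `v i` that are weakly increasing in the pointwise
order on profiles and symmetric within expertise groups, such that every feasible
per-bidder monotone allocation rule fails to `α`-approximate welfare at some
signal profile. -/
theorem general_valuations_welfare_lower_bound
    (ℓ k : ℕ) (hℓ : 1 ≤ ℓ) (hk : 2 ≤ k)
    (α : ℝ) (hα0 : 0 < α) (hα : α < (ℓ : ℝ) * ((k : ℝ) * ((k : ℝ) - 1) / 2) + 1) :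
    ∃ (n : ℕ) (hn : 1 ≤ n) (g : Fin n → Fin ℓ)
      (v : Fin n → (Fin n → Fin k) → ℝ),
      (∀ i s, 0 ≤ v i s) ∧
      (∀ i, Monotone (v i)) ∧
      (∀ (j : Fin n) (s : Fin n → Fin k) (π : Equiv.Perm (Fin n)),
        g ∘ π = g → v j (s ∘ π) = v j s) ∧
      ∀ x : (Fin n → Fin k) → Fin n → ℝ,
        (∀ s i, 0 ≤ x s i) →
        (∀ s, ∑ i, x s i ≤ 1) →
        (∀ (i : Fin n) (s : Fin n → Fin k),
          Monotone fun t => x (Function.update s i t) i) →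
        ∃ s : Fin n → Fin k,
          ∑ i, x s i * v i s <
            (1 / α) * Finset.univ.sup' ⟨⟨0, hn⟩, Finset.mem_univ _⟩ (fun i => v i s) := by
  classical
  haveI : NeZero ℓ := ⟨by omega⟩
  haveI : NeZero k := ⟨by omega⟩
  set n := Fintype.card (S9.Gad ℓ k) with hn_def
  have hn : 1 ≤ n := Fintype.card_pos
  let e : S9.Gad ℓ k ≃ Fin n := Fintype.equivFin _
  have hS2 : (∑ i ∈ Finset.range k, i) * 2 = k * (k - 1) := Finset.sum_range_id_mul_two k
  have hScast : ((∑ i ∈ Finset.range k, i : ℕ) : ℝ) = (k:ℝ) * ((k:ℝ) - 1) / 2 := by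
    have h := congrArg (fun m : ℕ => (m : ℝ)) hS2
    push_cast [Nat.cast_sub (show 1 ≤ k by omega), -Nat.cast_sum] at h
    linarith
  have hcard : (n : ℝ) = (ℓ:ℝ) * ((k:ℝ) * ((k:ℝ) - 1) / 2) + 1 := by
    rw [hn_def, S9.card_gad ℓ k]
    push_cast [-Nat.cast_sum]
    rw [hScast]
  have hαn : α < (n : ℝ) := by rw [hcard]; exact hα
  have hn0 : (0:ℝ) < (n:ℝ) := by exact_mod_cast Nat.pos_of_ne_zero (by omega)
  obtain ⟨β, hβ_def⟩ : ∃ β : ℝ, β = 1/α - 1/(n:ℝ) := ⟨_, rfl⟩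
  have hβ : 0 < β := by
    have h1 : 1/(n:ℝ) < 1/α := one_div_lt_one_div_of_lt hα0 hαn
    rw [hβ_def]; linarith
  obtain ⟨M, hM_def⟩ : ∃ M : ℝ, M = (n:ℝ)/β + 1 := ⟨_, rfl⟩
  have hM1 : (1:ℝ) ≤ M := by
    have h1 : 0 ≤ (n:ℝ)/β := by positivity
    rw [hM_def]; linarith
  have hM0 : (0:ℝ) < M := lt_of_lt_of_le one_pos hM1
  have hnM : (n:ℝ)/M < β := by
    rw [div_lt_iff₀ hM0, hM_def]
    have h1 : β * ((n:ℝ)/β) = n := by field_simp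
    have h2 : β * ((n:ℝ)/β + 1) = β * ((n:ℝ)/β) + β := by ring
    linarith
  refine ⟨n, hn, S9.gb ℓ k n e, S9.vb ℓ k n e M,
    fun i s => S9.vb_nonneg ℓ k n e M (le_of_lt hM0) i s,
    fun i => S9.vb_mono ℓ k n e M (le_of_lt hM0) i,
    fun j s π hπ => S9.vb_symm ℓ k n e M j s π hπ, ?_⟩
  intro x hx0 hx1 hxm
  have hchain : ∀ t : S9.Gad ℓ k, x (S9.Pb ℓ k n e t) (e t) ≤ x (S9.Qb ℓ k n e) (e t) := by
    intro t
    have h := hxm (e t) (S9.Qb ℓ k n e) (S9.lo_le_hi ℓ k t)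
    dsimp only at h
    rw [show Function.update (S9.Qb ℓ k n e) (e t) (S9.hi ℓ k t) = S9.Qb ℓ k n e by
      rw [← S9.Qb_e ℓ k n e t]; exact Function.update_eq_self _ _] at h
    exact h
  have hsum : ∑ t : S9.Gad ℓ k, x (S9.Pb ℓ k n e t) (e t) ≤ 1 := by
    calc ∑ t : S9.Gad ℓ k, x (S9.Pb ℓ k n e t) (e t)
        ≤ ∑ t : S9.Gad ℓ k, x (S9.Qb ℓ k n e) (e t) := Finset.sum_le_sum fun t _ => hchain t
      _ = ∑ i, x (S9.Qb ℓ k n e) i := Equiv.sum_comp e (x (S9.Qb ℓ k n e))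
      _ ≤ 1 := hx1 _
  have hex : ∃ t : S9.Gad ℓ k, x (S9.Pb ℓ k n e t) (e t) ≤ 1/(n:ℝ) := by
    by_contra hc
    push_neg at hc
    have h2 := Finset.sum_lt_sum_of_nonempty (Finset.univ_nonempty)
      (fun (t : S9.Gad ℓ k) _ => hc t)
    rw [Finset.sum_const, Finset.card_univ, nsmul_eq_mul, mul_one_div,
      div_self (ne_of_gt hn0)] at h2
    linarith
  obtain ⟨t, ht⟩ := hex
  refine ⟨S9.Pb ℓ k n e t, ?_⟩
  have hW : (0:ℝ) < M ^ S9.wb ℓ k n e t := pow_pos hM0 _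
  have hxle1 : ∀ i, x (S9.Pb ℓ k n e t) i ≤ 1 :=
    fun i => le_trans (Finset.single_le_sum (fun j _ => hx0 _ j) (Finset.mem_univ i)) (hx1 _)
  have hb1 : x (S9.Pb ℓ k n e t) (e t) * S9.vb ℓ k n e M (e t) (S9.Pb ℓ k n e t)
      ≤ (1/(n:ℝ)) * M ^ S9.wb ℓ k n e t := by
    rw [S9.vb_self]
    exact mul_le_mul_of_nonneg_right ht (le_of_lt hW)
  have hb2 : ∑ i ∈ Finset.univ.erase (e t),
      x (S9.Pb ℓ k n e t) i * S9.vb ℓ k n e M i (S9.Pb ℓ k n e t)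
      ≤ (n:ℝ) * (M ^ S9.wb ℓ k n e t / M) := by
    calc ∑ i ∈ Finset.univ.erase (e t),
        x (S9.Pb ℓ k n e t) i * S9.vb ℓ k n e M i (S9.Pb ℓ k n e t)
        ≤ ∑ _i ∈ Finset.univ.erase (e t), (M ^ S9.wb ℓ k n e t / M) := by
          refine Finset.sum_le_sum fun i hi => ?_
          have hne : i ≠ e t := Finset.ne_of_mem_erase hi
          calc x (S9.Pb ℓ k n e t) i * S9.vb ℓ k n e M i (S9.Pb ℓ k n e t)
              ≤ 1 * (M ^ S9.wb ℓ k n e t / M) :=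
                mul_le_mul (hxle1 i) (S9.vb_other ℓ k n e M hM1 t i hne)
                  (S9.vb_nonneg ℓ k n e M (le_of_lt hM0) i _) zero_le_one
            _ = M ^ S9.wb ℓ k n e t / M := one_mul _
      _ = ((Finset.univ.erase (e t)).card : ℝ) * (M ^ S9.wb ℓ k n e t / M) := by
          rw [Finset.sum_const, nsmul_eq_mul]
      _ ≤ (n:ℝ) * (M ^ S9.wb ℓ k n e t / M) := by
          refine mul_le_mul_of_nonneg_right ?_ (by positivity)
          have hcle : (Finset.univ.erase (e t)).card ≤ n := by
            calc (Finset.univ.erase (e t)).card ≤ (Finset.univ : Finset (Fin n)).card :=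
                Finset.card_erase_le
              _ = n := by rw [Finset.card_univ, Fintype.card_fin]
          exact_mod_cast hcle
  have hmain : (1/(n:ℝ)) * M ^ S9.wb ℓ k n e t + (n:ℝ) * (M ^ S9.wb ℓ k n e t / M)
      < (1/α) * M ^ S9.wb ℓ k n e t := by
    have h1 : 1/(n:ℝ) + (n:ℝ)/M < 1/α := by
      rw [hβ_def] at hnM; linarith
    calc (1/(n:ℝ)) * M ^ S9.wb ℓ k n e t + (n:ℝ) * (M ^ S9.wb ℓ k n e t / M)
        = (1/(n:ℝ) + (n:ℝ)/M) * M ^ S9.wb ℓ k n e t := by ring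
      _ < (1/α) * M ^ S9.wb ℓ k n e t := mul_lt_mul_of_pos_right h1 hW
  have hsup : M ^ S9.wb ℓ k n e t ≤ Finset.univ.sup' ⟨⟨0, hn⟩, Finset.mem_univ _⟩
      (fun i => S9.vb ℓ k n e M i (S9.Pb ℓ k n e t)) := by
    have h := Finset.le_sup' (fun i => S9.vb ℓ k n e M i (S9.Pb ℓ k n e t))
      (Finset.mem_univ (e t))
    rw [S9.vb_self ℓ k n e M t] at h
    exact h
  calc ∑ i, x (S9.Pb ℓ k n e t) i * S9.vb ℓ k n e M i (S9.Pb ℓ k n e t)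
      = x (S9.Pb ℓ k n e t) (e t) * S9.vb ℓ k n e M (e t) (S9.Pb ℓ k n e t)
        + ∑ i ∈ Finset.univ.erase (e t),
            x (S9.Pb ℓ k n e t) i * S9.vb ℓ k n e M i (S9.Pb ℓ k n e t) :=
        (Finset.add_sum_erase _ _ (Finset.mem_univ (e t))).symm
    _ ≤ (1/(n:ℝ)) * M ^ S9.wb ℓ k n e t + (n:ℝ) * (M ^ S9.wb ℓ k n e t / M) :=
        add_le_add hb1 hb2
    _ < (1/α) * M ^ S9.wb ℓ k n e t := hmain
    _ ≤ (1/α) * Finset.univ.sup' ⟨⟨0, hn⟩, Finset.mem_univ _⟩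
          (fun i => S9.vb ℓ k n e M i (S9.Pb ℓ k n e t)) :=
        mul_le_mul_of_nonneg_left hsup (by positivity)
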